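/- Let X be an m×n complex matrix. Then the following are equivalent: (1) for every natural number l, every γ ∈ ℂᵐ, every l×m complex matrix L, and every l×n complex matrix R with ‖γ‖₂ · ‖L‖_c · ‖R‖_c ≤ 1, one has |Tr((Δ_m(γ) Lᴴ R)ᴴ X)| ≤ 1; (2) there exist an m×n complex matrix C and ξ ∈ ℂⁿ such that X = C Δ_n(ξ) and ‖C‖_∞ · ‖ξ‖₂ ≤ 1. -/

import Mathlib

open Matrix BigOperators

/-- The ℓ²→ℓ² operator norm of a complex matrix. -/
noncomputable def opNorm {m n : ℕ} (A : Matrix (Fin m) (Fin n) ℂ) : ℝ :=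
  ‖(Matrix.toEuclideanLin A).toContinuousLinearMap‖

/-- The Euclidean norm of a complex vector. -/
noncomputable def eNorm {n : ℕ} (ξ : Fin n → ℂ) : ℝ :=
  Real.sqrt (∑ j, ‖ξ j‖ ^ 2)

/-- The column norm: the maximum Euclidean norm of a column. -/
noncomputable def colNorm {l m : ℕ} (L : Matrix (Fin l) (Fin m) ℂ) : ℝ :=
  ⨆ j : Fin m, Real.sqrt (∑ i, ‖L i j‖ ^ 2)

noncomputable def Phi {m n : ℕ} (X : Matrix (Fin m) (Fin n) ℂ) (v : Fin n → ℂ) : ℝ :=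
  ∑ i, ‖X.mulVec v i‖ ^ 2

lemma Phi_nonneg {m n : ℕ} (X : Matrix (Fin m) (Fin n) ℂ) (v) : 0 ≤ Phi X v :=
  Finset.sum_nonneg fun _ _ => sq_nonneg _

lemma mulVec_norm_le {m n : ℕ} (A : Matrix (Fin m) (Fin n) ℂ) (v : Fin n → ℂ) :
    Real.sqrt (∑ i, ‖A.mulVec v i‖ ^ 2) ≤ opNorm A * Real.sqrt (∑ j, ‖v j‖ ^ 2) := by
  have h := (Matrix.toEuclideanLin A).toContinuousLinearMap.le_opNorm
    ((WithLp.equiv 2 (Fin n → ℂ)).symm v)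
  simpa [EuclideanSpace.norm_eq, Matrix.toEuclideanLin_apply, opNorm] using h

lemma opNorm_le_bound {m n : ℕ} (A : Matrix (Fin m) (Fin n) ℂ) {c : ℝ} (hc : 0 ≤ c)
    (h : ∀ v : Fin n → ℂ,
      Real.sqrt (∑ i, ‖A.mulVec v i‖ ^ 2) ≤ c * Real.sqrt (∑ j, ‖v j‖ ^ 2)) :
    opNorm A ≤ c := by
  refine ContinuousLinearMap.opNorm_le_bound _ hc fun x => ?_
  have h' := h ((WithLp.equiv 2 (Fin n → ℂ)) x)
  simpa [EuclideanSpace.norm_eq, Matrix.toEuclideanLin_apply] using h'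

section
variable {l m n : ℕ}

lemma col_le_colNorm_raw (L : Matrix (Fin l) (Fin m) ℂ) (j : Fin m) :
    Real.sqrt (∑ i, ‖L i j‖ ^ 2) ≤ ⨆ j : Fin m, Real.sqrt (∑ i, ‖L i j‖ ^ 2) :=
  le_ciSup (f := fun j : Fin m => Real.sqrt (∑ i, ‖L i j‖ ^ 2))
    (Set.Finite.bddAbove (Set.finite_range _)) j

lemma sum_comm3 {ι₁ ι₂ ι₃ : Type*} [Fintype ι₁] [Fintype ι₂] [Fintype ι₃]
    (f : ι₁ → ι₂ → ι₃ → ℂ) :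
    (∑ j : ι₃, ∑ i : ι₂, ∑ t : ι₁, f t i j) = ∑ t : ι₁, ∑ i : ι₂, ∑ j : ι₃, f t i j := by
  calc (∑ j : ι₃, ∑ i : ι₂, ∑ t : ι₁, f t i j)
      = ∑ i : ι₂, ∑ j : ι₃, ∑ t : ι₁, f t i j := Finset.sum_comm
    _ = ∑ i : ι₂, ∑ t : ι₁, ∑ j : ι₃, f t i j :=
        Finset.sum_congr rfl fun _ _ => Finset.sum_comm
    _ = ∑ t : ι₁, ∑ i : ι₂, ∑ j : ι₃, f t i j := Finset.sum_comm

lemma trace_eq (γ : Fin m → ℂ) (L : Matrix (Fin l) (Fin m) ℂ) (R : Matrix (Fin l) (Fin n) ℂ)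
    (X : Matrix (Fin m) (Fin n) ℂ) :
    ((Matrix.diagonal γ * (Lᴴ * R))ᴴ * X).trace
      = ∑ t, ∑ i, (starRingEnd ℂ) (γ i) * L t i * (∑ j, (starRingEnd ℂ) (R t j) * X i j) := by
  have lhs : ((Matrix.diagonal γ * (Lᴴ * R))ᴴ * X).trace
      = ∑ j, ∑ i, ∑ t, (starRingEnd ℂ) (γ i) * L t i * ((starRingEnd ℂ) (R t j) * X i j) := by
    rw [Matrix.trace]
    refine Finset.sum_congr rfl fun j _ => ?_
    rw [Matrix.diag_apply, Matrix.mul_apply]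
    refine Finset.sum_congr rfl fun i _ => ?_
    rw [Matrix.conjTranspose_apply, Matrix.diagonal_mul, Matrix.mul_apply]
    simp only [Matrix.conjTranspose_apply, star_mul', star_sum, star_star, starRingEnd_apply,
      Finset.sum_mul, Finset.mul_sum]
    refine Finset.sum_congr rfl fun t _ => ?_
    ring
  rw [lhs, sum_comm3]
  refine Finset.sum_congr rfl fun t _ => Finset.sum_congr rfl fun i _ => ?_
  rw [Finset.mul_sum]

end

lemma colNorm_nonneg {l m : ℕ} (L : Matrix (Fin l) (Fin m) ℂ) : 0 ≤ colNorm L :=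
  Real.iSup_nonneg fun _ => Real.sqrt_nonneg _

lemma eNorm_nonneg {n : ℕ} (ξ : Fin n → ℂ) : 0 ≤ eNorm ξ := Real.sqrt_nonneg _

lemma opNorm_nonneg {m n : ℕ} (A : Matrix (Fin m) (Fin n) ℂ) : 0 ≤ opNorm A := norm_nonneg _

lemma col_le_colNorm {l m : ℕ} (L : Matrix (Fin l) (Fin m) ℂ) (j : Fin m) :
    Real.sqrt (∑ i, ‖L i j‖ ^ 2) ≤ colNorm L :=
  le_ciSup (f := fun j : Fin m => Real.sqrt (∑ i, ‖L i j‖ ^ 2))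
    (Set.Finite.bddAbove (Set.finite_range _)) j

lemma col_sq_le_colNorm_sq {l m : ℕ} (L : Matrix (Fin l) (Fin m) ℂ) (j : Fin m) :
    (∑ i, ‖L i j‖ ^ 2) ≤ colNorm L ^ 2 := by
  have h := col_le_colNorm L j
  have h0 : (0:ℝ) ≤ ∑ i, ‖L i j‖ ^ 2 := Finset.sum_nonneg fun _ _ => sq_nonneg _
  calc (∑ i, ‖L i j‖ ^ 2) = Real.sqrt (∑ i, ‖L i j‖ ^ 2) ^ 2 := (Real.sq_sqrt h0).symm
    _ ≤ colNorm L ^ 2 := pow_le_pow_left₀ (Real.sqrt_nonneg _) h 2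

lemma easy_dir {l m n : ℕ} (C : Matrix (Fin m) (Fin n) ℂ) (ξ : Fin n → ℂ)
    (hC : opNorm C * eNorm ξ ≤ 1)
    (γ : Fin m → ℂ) (L : Matrix (Fin l) (Fin m) ℂ) (R : Matrix (Fin l) (Fin n) ℂ)
    (hp : eNorm γ * colNorm L * colNorm R ≤ 1) :
    ‖((Matrix.diagonal γ * (Lᴴ * R))ᴴ * (C * Matrix.diagonal ξ)).trace‖ ≤ 1 := by
  classical
  set y : Fin l → Fin n → ℂ := fun t j => ξ j * (starRingEnd ℂ) (R t j) with hy
  have htr : ((Matrix.diagonal γ * (Lᴴ * R))ᴴ * (C * Matrix.diagonal ξ)).trace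
      = ∑ t, ∑ i, ((starRingEnd ℂ) (γ i) * L t i) * (C.mulVec (y t)) i := by
    rw [trace_eq]
    refine Finset.sum_congr rfl fun t _ => Finset.sum_congr rfl fun i _ => ?_
    have hmv : (C.mulVec (y t)) i = ∑ j, C i j * y t j := by
      simp [Matrix.mulVec, dotProduct]
    rw [hmv, Finset.mul_sum, Finset.mul_sum]
    refine Finset.sum_congr rfl fun j _ => ?_
    rw [Matrix.mul_diagonal]
    simp only [hy]
    ring
  rw [htr]
  set a : Fin l → ℝ := fun t => Real.sqrt (∑ i, (‖γ i‖ * ‖L t i‖) ^ 2) with ha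
  set b : Fin l → ℝ := fun t => Real.sqrt (∑ j, ‖y t j‖ ^ 2) with hb
  have key : ∀ t, ‖∑ i, ((starRingEnd ℂ) (γ i) * L t i) * (C.mulVec (y t)) i‖
      ≤ opNorm C * (a t * b t) := by
    intro t
    have h1 : ‖∑ i, ((starRingEnd ℂ) (γ i) * L t i) * (C.mulVec (y t)) i‖
        ≤ ∑ i, (‖γ i‖ * ‖L t i‖) * ‖(C.mulVec (y t)) i‖ := by
      refine (norm_sum_le _ _).trans (le_of_eq (Finset.sum_congr rfl fun i _ => ?_))
      rw [norm_mul, norm_mul, RCLike.norm_conj]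
    refine h1.trans ?_
    have h2 := Real.sum_mul_le_sqrt_mul_sqrt Finset.univ
      (fun i => ‖γ i‖ * ‖L t i‖) (fun i => ‖(C.mulVec (y t)) i‖)
    refine h2.trans ?_
    have h3 : Real.sqrt (∑ i, ‖(C.mulVec (y t)) i‖ ^ 2) ≤ opNorm C * b t := mulVec_norm_le C (y t)
    calc a t * Real.sqrt (∑ i, ‖(C.mulVec (y t)) i‖ ^ 2) ≤ a t * (opNorm C * b t) :=
          mul_le_mul_of_nonneg_left h3 (Real.sqrt_nonneg _)
      _ = opNorm C * (a t * b t) := by ring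
  have step1 : ‖∑ t, ∑ i, ((starRingEnd ℂ) (γ i) * L t i) * (C.mulVec (y t)) i‖
      ≤ opNorm C * ∑ t, a t * b t := by
    refine (norm_sum_le _ _).trans ?_
    rw [Finset.mul_sum]
    exact Finset.sum_le_sum fun t _ => key t
  have step2 : (∑ t, a t * b t) ≤ Real.sqrt (∑ t, a t ^ 2) * Real.sqrt (∑ t, b t ^ 2) :=
    Real.sum_mul_le_sqrt_mul_sqrt Finset.univ a b
  have hA : (∑ t, a t ^ 2) ≤ (eNorm γ * colNorm L) ^ 2 := by
    have h1 : ∀ t, a t ^ 2 = ∑ i, ‖γ i‖ ^ 2 * ‖L t i‖ ^ 2 := by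
      intro t
      rw [ha]
      rw [Real.sq_sqrt (Finset.sum_nonneg fun _ _ => sq_nonneg _)]
      exact Finset.sum_congr rfl fun i _ => by ring
    calc (∑ t, a t ^ 2) = ∑ t, ∑ i, ‖γ i‖ ^ 2 * ‖L t i‖ ^ 2 :=
          Finset.sum_congr rfl fun t _ => h1 t
      _ = ∑ i, ‖γ i‖ ^ 2 * ∑ t, ‖L t i‖ ^ 2 := by
          rw [Finset.sum_comm]
          exact Finset.sum_congr rfl fun i _ => (Finset.mul_sum _ _ _).symm
      _ ≤ ∑ i, ‖γ i‖ ^ 2 * colNorm L ^ 2 := by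
          refine Finset.sum_le_sum fun i _ => ?_
          exact mul_le_mul_of_nonneg_left (col_sq_le_colNorm_sq L i) (sq_nonneg _)
      _ = (∑ i, ‖γ i‖ ^ 2) * colNorm L ^ 2 := (Finset.sum_mul _ _ _).symm
      _ = (eNorm γ * colNorm L) ^ 2 := by
          rw [mul_pow, eNorm, Real.sq_sqrt (Finset.sum_nonneg fun _ _ => sq_nonneg _)]
  have hB : (∑ t, b t ^ 2) ≤ (eNorm ξ * colNorm R) ^ 2 := by
    have h1 : ∀ t, b t ^ 2 = ∑ j, ‖ξ j‖ ^ 2 * ‖R t j‖ ^ 2 := by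
      intro t
      rw [hb, Real.sq_sqrt (Finset.sum_nonneg fun _ _ => sq_nonneg _)]
      refine Finset.sum_congr rfl fun j _ => ?_
      simp only [hy]
      rw [norm_mul, RCLike.norm_conj]
      ring
    calc (∑ t, b t ^ 2) = ∑ t, ∑ j, ‖ξ j‖ ^ 2 * ‖R t j‖ ^ 2 :=
          Finset.sum_congr rfl fun t _ => h1 t
      _ = ∑ j, ‖ξ j‖ ^ 2 * ∑ t, ‖R t j‖ ^ 2 := by
          rw [Finset.sum_comm]
          exact Finset.sum_congr rfl fun j _ => (Finset.mul_sum _ _ _).symm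
      _ ≤ ∑ j, ‖ξ j‖ ^ 2 * colNorm R ^ 2 := by
          refine Finset.sum_le_sum fun j _ => ?_
          exact mul_le_mul_of_nonneg_left (col_sq_le_colNorm_sq R j) (sq_nonneg _)
      _ = (∑ j, ‖ξ j‖ ^ 2) * colNorm R ^ 2 := (Finset.sum_mul _ _ _).symm
      _ = (eNorm ξ * colNorm R) ^ 2 := by
          rw [mul_pow, eNorm, Real.sq_sqrt (Finset.sum_nonneg fun _ _ => sq_nonneg _)]
  have hsA : Real.sqrt (∑ t, a t ^ 2) ≤ eNorm γ * colNorm L := by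
    refine (Real.sqrt_le_sqrt hA).trans (le_of_eq ?_)
    exact Real.sqrt_sq (mul_nonneg (eNorm_nonneg _) (colNorm_nonneg _))
  have hsB : Real.sqrt (∑ t, b t ^ 2) ≤ eNorm ξ * colNorm R := by
    refine (Real.sqrt_le_sqrt hB).trans (le_of_eq ?_)
    exact Real.sqrt_sq (mul_nonneg (eNorm_nonneg _) (colNorm_nonneg _))
  have habn : (0:ℝ) ≤ ∑ t, a t * b t :=
    Finset.sum_nonneg fun t _ => mul_nonneg (Real.sqrt_nonneg _) (Real.sqrt_nonneg _)
  have final : opNorm C * ∑ t, a t * b t ≤ 1 := by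
    have h4 : (∑ t, a t * b t) ≤ (eNorm γ * colNorm L) * (eNorm ξ * colNorm R) :=
      step2.trans (mul_le_mul hsA hsB (Real.sqrt_nonneg _)
        (mul_nonneg (eNorm_nonneg _) (colNorm_nonneg _)))
    calc opNorm C * ∑ t, a t * b t
        ≤ opNorm C * ((eNorm γ * colNorm L) * (eNorm ξ * colNorm R)) :=
          mul_le_mul_of_nonneg_left h4 (opNorm_nonneg _)
      _ = (opNorm C * eNorm ξ) * (eNorm γ * colNorm L * colNorm R) := by ring
      _ ≤ 1 * 1 := by
          refine mul_le_mul hC hp ?_ ?_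
          · exact mul_nonneg (mul_nonneg (eNorm_nonneg _) (colNorm_nonneg _)) (colNorm_nonneg _)
          · exact le_trans (mul_nonneg (opNorm_nonneg _) (eNorm_nonneg _)) hC |>.trans le_rfl |> fun _ => zero_le_one
      _ = 1 := mul_one 1
  exact step1.trans final

lemma colNorm_le {l m : ℕ} (L : Matrix (Fin l) (Fin m) ℂ) {c : ℝ} (hc : 0 ≤ c)
    (h : ∀ j, Real.sqrt (∑ i, ‖L i j‖ ^ 2) ≤ c) : colNorm L ≤ c :=
  Real.iSup_le h hc

lemma colNorm_nonneg' {l m : ℕ} (L : Matrix (Fin l) (Fin m) ℂ) : 0 ≤ colNorm L :=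
  Real.iSup_nonneg fun _ => Real.sqrt_nonneg _

lemma cond_imp_H {m n : ℕ} (X : Matrix (Fin m) (Fin n) ℂ)
    (h1 : ∀ (l : ℕ) (γ : Fin m → ℂ) (L : Matrix (Fin l) (Fin m) ℂ)
        (R : Matrix (Fin l) (Fin n) ℂ),
        eNorm γ * colNorm L * colNorm R ≤ 1 →
        ‖((Matrix.diagonal γ * (Lᴴ * R))ᴴ * X).trace‖ ≤ 1)
    (l : ℕ) (v : Fin l → Fin n → ℂ) (hv : ∀ j, ∑ t, ‖v t j‖ ^ 2 ≤ 1) :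
    ∑ t, Phi X (v t) ≤ 1 := by
  classical
  set w : Fin l → Fin m → ℂ := fun t => X.mulVec (v t) with hw
  set r : Fin m → ℝ := fun i => Real.sqrt (∑ t, ‖w t i‖ ^ 2) with hr
  set T : ℝ := ∑ t, Phi X (v t) with hTdef
  have hrsq' : ∀ i : Fin m, ∑ t, ‖w t i‖ ^ 2 = r i ^ 2 := fun i =>
    (Real.sq_sqrt (Finset.sum_nonneg fun _ _ => sq_nonneg _)).symm
  have hT : T = ∑ i, r i ^ 2 := by
    have h' : T = ∑ t, ∑ i, ‖w t i‖ ^ 2 := by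
      rw [hTdef]; simp only [Phi]; rfl
    rw [h', Finset.sum_comm]
    exact Finset.sum_congr rfl fun i _ => hrsq' i
  have hT0 : 0 ≤ T := Finset.sum_nonneg fun t _ => Finset.sum_nonneg fun _ _ => sq_nonneg _
  rcases eq_or_lt_of_le hT0 with h0 | hTpos
  · rw [← h0]; exact zero_le_one
  set F : ℝ := Real.sqrt T with hF
  have hFpos : 0 < F := Real.sqrt_pos.mpr hTpos
  set γ : Fin m → ℂ := fun i => ((r i / T : ℝ) : ℂ) with hγ
  set L : Matrix (Fin l) (Fin m) ℂ :=
    Matrix.of (fun t i => if r i = 0 then 0 else (starRingEnd ℂ) (w t i) * ((F / r i : ℝ) : ℂ))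
    with hL
  set R : Matrix (Fin l) (Fin n) ℂ := Matrix.of (fun t j => (starRingEnd ℂ) (v t j)) with hR
  have hrnn : ∀ i, 0 ≤ r i := fun i => Real.sqrt_nonneg _
  have hrsq : ∀ i, ∑ t, ‖w t i‖ ^ 2 = r i ^ 2 := fun i =>
    (Real.sq_sqrt (Finset.sum_nonneg fun _ _ => sq_nonneg _)).symm
  -- eNorm γ = 1 / F
  have hTne : T ≠ 0 := ne_of_gt hTpos
  have heγ : eNorm γ = 1 / F := by
    rw [eNorm]
    have hterm : ∀ i : Fin m, ‖γ i‖ ^ 2 = r i ^ 2 / T ^ 2 := by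
      intro i
      rw [hγ]
      rw [Complex.norm_real, Real.norm_eq_abs, abs_of_nonneg (div_nonneg (hrnn i) hT0), div_pow]
    rw [Finset.sum_congr rfl fun i _ => hterm i, ← Finset.sum_div, ← hT]
    rw [show T / T ^ 2 = 1 / T by field_simp]
    rw [one_div, Real.sqrt_inv, ← hF, one_div]
  -- colNorm L ≤ F
  have hcolL : colNorm L ≤ F := by
    refine colNorm_le L hFpos.le fun i => ?_
    by_cases hri : r i = 0
    · have : ∀ t : Fin l, ‖L t i‖ ^ 2 = 0 := by
        intro t; simp [hL, hri]
      rw [Finset.sum_congr rfl fun t _ => this t]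
      simp [hFpos.le]
    · have : ∀ t : Fin l, ‖L t i‖ ^ 2 = ‖w t i‖ ^ 2 * (F / r i) ^ 2 := by
        intro t
        simp only [hL, Matrix.of_apply, if_neg hri, norm_mul, RCLike.norm_conj,
          Complex.norm_real, Real.norm_eq_abs, mul_pow, sq_abs]
      rw [Finset.sum_congr rfl fun t _ => this t, ← Finset.sum_mul, hrsq i, div_pow]
      rw [show r i ^ 2 * (F ^ 2 / r i ^ 2) = F ^ 2 by field_simp]
      rw [Real.sqrt_sq hFpos.le]
  -- colNorm R ≤ 1
  have hcolR : colNorm R ≤ 1 := by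
    refine colNorm_le R zero_le_one fun j => ?_
    have : ∀ t : Fin l, ‖R t j‖ ^ 2 = ‖v t j‖ ^ 2 := by
      intro t; simp [hR]
    rw [Finset.sum_congr rfl fun t _ => this t]
    exact Real.sqrt_le_one.mpr (hv j)
  -- product condition
  have hprod : eNorm γ * colNorm L * colNorm R ≤ 1 := by
    rw [heγ]
    have h1 : (1 / F) * colNorm L ≤ 1 := by
      rw [div_mul_eq_mul_div, one_mul, div_le_one hFpos]
      exact hcolL
    calc 1 / F * colNorm L * colNorm R ≤ 1 * 1 :=
        mul_le_mul h1 hcolR (colNorm_nonneg' R) zero_le_one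
      _ = 1 := mul_one 1
  -- trace value
  have conj_mul_self : ∀ z : ℂ, (starRingEnd ℂ) z * z = ((‖z‖ ^ 2 : ℝ) : ℂ) := by
    intro z
    rw [mul_comm, Complex.mul_conj]
    norm_cast
    rw [Complex.normSq_eq_norm_sq]
  have hinner : ∀ (t : Fin l) (i : Fin m), (∑ j, (starRingEnd ℂ) (R t j) * X i j) = w t i := by
    intro t i
    rw [hw]
    simp only [Matrix.mulVec, dotProduct]
    refine Finset.sum_congr rfl fun j _ => ?_
    simp only [hR, Matrix.of_apply, Complex.conj_conj]
    ring
  have hsum : ∀ i : Fin m, (∑ t, (starRingEnd ℂ) (γ i) * L t i * w t i)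
      = ((F / T * r i ^ 2 : ℝ) : ℂ) := by
    intro i
    by_cases hri : r i = 0
    · simp [hL, hri]
    · have hterm : ∀ t : Fin l, (starRingEnd ℂ) (γ i) * L t i * w t i
          = ((r i / T * (F / r i) : ℝ) : ℂ) * ((‖w t i‖ ^ 2 : ℝ) : ℂ) := by
        intro t
        simp only [hL, Matrix.of_apply, if_neg hri, hγ, Complex.conj_ofReal]
        rw [show ((r i / T : ℝ) : ℂ) * ((starRingEnd ℂ) (w t i) * ((F / r i : ℝ) : ℂ)) * w t i
            = (((r i / T : ℝ) : ℂ) * ((F / r i : ℝ) : ℂ)) * ((starRingEnd ℂ) (w t i) * w t i)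
            from by ring]
        rw [conj_mul_self (w t i)]
        norm_cast
      rw [Finset.sum_congr rfl fun t _ => hterm t, ← Finset.mul_sum]
      rw [show (∑ t, ((‖w t i‖ ^ 2 : ℝ) : ℂ)) = ((∑ t, ‖w t i‖ ^ 2 : ℝ) : ℂ) by push_cast; rfl]
      rw [hrsq i]
      norm_cast
      field_simp
  have htrace : ((Matrix.diagonal γ * (Lᴴ * R))ᴴ * X).trace = ((F : ℝ) : ℂ) := by
    rw [trace_eq]
    rw [Finset.sum_congr rfl fun t (_ : t ∈ Finset.univ) =>
      Finset.sum_congr rfl fun i (_ : i ∈ Finset.univ) => by rw [hinner t i]]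
    rw [Finset.sum_comm]
    rw [Finset.sum_congr rfl fun i (_ : i ∈ Finset.univ) => hsum i]
    rw [show (∑ i, ((F / T * r i ^ 2 : ℝ) : ℂ)) = ((∑ i, F / T * r i ^ 2 : ℝ) : ℂ) by
      push_cast; rfl]
    rw [← Finset.mul_sum, ← hT]
    norm_cast
    field_simp
  have hfinal := h1 l γ L R hprod
  rw [htrace] at hfinal
  rw [Complex.norm_real, Real.norm_eq_abs, abs_of_nonneg hFpos.le] at hfinal
  -- F = √T ≤ 1 implies T ≤ 1
  have : T ≤ 1 := by
    have := Real.sqrt_le_sqrt (le_of_eq (rfl : T = T))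
    nlinarith [Real.sq_sqrt hT0, hFpos.le, hfinal]
  exact this

lemma Phi_smul {m n : ℕ} (X : Matrix (Fin m) (Fin n) ℂ) (r : ℝ) (v : Fin n → ℂ) :
    Phi X (fun j => (r : ℂ) * v j) = r ^ 2 * Phi X v := by
  have h : (fun j => (r : ℂ) * v j) = (r : ℂ) • v := by
    funext j; simp [Pi.smul_apply, smul_eq_mul]
  rw [Phi, h]
  simp only [Matrix.mulVec_smul, Pi.smul_apply, smul_eq_mul, norm_mul, Complex.norm_real,
    Real.norm_eq_abs, mul_pow, sq_abs]
  rw [← Finset.mul_sum]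
  rfl

lemma exists_lambda {m n : ℕ} (X : Matrix (Fin m) (Fin n) ℂ)
    (H : ∀ (l : ℕ) (v : Fin l → Fin n → ℂ),
      (∀ j, ∑ t, ‖v t j‖ ^ 2 ≤ 1) → ∑ t, Phi X (v t) ≤ 1) :
    ∃ lam : Fin n → ℝ, (∀ j, 0 ≤ lam j) ∧ (∑ j, lam j) ≤ 1 ∧
      ∀ v : Fin n → ℂ, Phi X v ≤ ∑ j, lam j * ‖v j‖ ^ 2 := by
  classical
  by_cases hz : ∀ v : Fin n → ℂ, Phi X v = 0
  · refine ⟨fun _ => 0, fun _ => le_rfl, by simp, fun v => ?_⟩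
    simp [hz v]
  push_neg at hz
  obtain ⟨v₀, hv₀⟩ := hz
  have hn : Nonempty (Fin n) := by
    rcases Nat.eq_zero_or_pos n with h | h
    · exfalso; apply hv₀; subst h
      simp [Phi, Matrix.mulVec, dotProduct]
    · exact ⟨⟨0, h⟩⟩
  -- the sets
  set C₀ : Set (Fin n → ℝ) :=
    {c | ∃ v : Fin n → ℂ, Phi X v ≠ 0 ∧ c = fun j => ‖v j‖ ^ 2 / Phi X v} with hC₀
  set O : Set (Fin n → ℝ) := {c | ∀ j, c j < 1} with hO
  have hOopen : IsOpen O := by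
    have : O = ⋂ j, (fun c : Fin n → ℝ => c j) ⁻¹' Set.Iio 1 := by
      ext c; simp [hO, Set.mem_iInter]
    rw [this]
    exact isOpen_iInter_of_finite fun j => (isOpen_Iio).preimage (continuous_apply j)
  have hOconv : Convex ℝ O := by
    have : O = ⋂ j, {c : Fin n → ℝ | c j < 1} := by
      ext c; simp [hO, Set.mem_iInter]
    rw [this]
    exact convex_iInter fun j =>
      convex_halfSpace_lt ⟨fun a b => rfl, fun a b => rfl⟩ 1
  have hdisj : Disjoint O (convexHull ℝ C₀) := by
    rw [Set.disjoint_left]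
    rintro c hcO hcK
    rw [convexHull_eq] at hcK
    obtain ⟨ι, t, wt, z, hw0, hw1, hzC, hcm⟩ := hcK
    have hmem : ∀ i ∈ t, ∃ v : Fin n → ℂ, Phi X v ≠ 0 ∧ z i = fun j => ‖v j‖ ^ 2 / Phi X v :=
      fun i hi => hzC i hi
    choose! vv hP1 hP2 using hmem
    have hPpos : ∀ i ∈ t, 0 < Phi X (vv i) := fun i hi =>
      lt_of_le_of_ne (Phi_nonneg _ _) (Ne.symm (hP1 i hi))
    have hceq : ∀ j, c j = ∑ i ∈ t, wt i * (‖vv i j‖ ^ 2 / Phi X (vv i)) := by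
      intro j
      have := hcm
      rw [Finset.centerMass_eq_of_sum_1 _ _ hw1] at this
      have hc : c j = (∑ i ∈ t, wt i • z i) j := by rw [this]
      rw [hc, Finset.sum_apply]
      refine Finset.sum_congr rfl fun i hi => ?_
      rw [Pi.smul_apply, smul_eq_mul, hP2 i hi]
    have hcnn : ∀ j, 0 ≤ c j := by
      intro j
      rw [hceq j]
      exact Finset.sum_nonneg fun i hi =>
        mul_nonneg (hw0 i hi) (div_nonneg (sq_nonneg _) (Phi_nonneg _ _))
    set s : ℝ := Finset.univ.sup' Finset.univ_nonempty (fun j => c j) with hs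
    have hslt1 : s < 1 := by
      rw [hs, Finset.sup'_lt_iff]
      exact fun j _ => hcO j
    have hcles : ∀ j, c j ≤ s := fun j => Finset.le_sup' (fun j => c j) (Finset.mem_univ j)
    have hsnn : 0 ≤ s := le_trans (hcnn (Classical.arbitrary _)) (hcles _)
    have hspos : 0 < s := by
      rcases lt_or_eq_of_le hsnn with h | h
      · exact h
      exfalso
      have hc0 : ∀ j, c j = 0 := fun j => le_antisymm (h ▸ hcles j) (hcnn j)
      have hex : ∃ i ∈ t, 0 < wt i := by
        by_contra hcon
        push_neg at hcon
        have : (∑ i ∈ t, wt i) ≤ 0 :=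
          Finset.sum_nonpos fun i hi => hcon i hi
        rw [hw1] at this; linarith
      obtain ⟨i₀, hi₀, hwi₀⟩ := hex
      have hv0 : vv i₀ = 0 := by
        funext j
        have hterm : wt i₀ * (‖vv i₀ j‖ ^ 2 / Phi X (vv i₀)) ≤ c j := by
          rw [hceq j]
          exact Finset.single_le_sum
            (f := fun i => wt i * (‖vv i j‖ ^ 2 / Phi X (vv i)))
            (fun i hi => mul_nonneg (hw0 i hi) (div_nonneg (sq_nonneg _) (Phi_nonneg _ _))) hi₀
        rw [hc0 j] at hterm
        have h1 : 0 ≤ wt i₀ * (‖vv i₀ j‖ ^ 2 / Phi X (vv i₀)) :=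
          mul_nonneg hwi₀.le (div_nonneg (sq_nonneg _) (Phi_nonneg _ _))
        have h2 : wt i₀ * (‖vv i₀ j‖ ^ 2 / Phi X (vv i₀)) = 0 := le_antisymm hterm h1
        have h3 : ‖vv i₀ j‖ ^ 2 / Phi X (vv i₀) = 0 := by
          rcases mul_eq_zero.mp h2 with h | h
          · exact absurd h (ne_of_gt hwi₀)
          · exact h
        have h4 : ‖vv i₀ j‖ ^ 2 = 0 :=
          (div_eq_zero_iff.mp h3).resolve_right (hPpos i₀ hi₀).ne'
        have h5 : ‖vv i₀ j‖ = 0 :=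
          pow_eq_zero_iff (by norm_num : (2:ℕ) ≠ 0) |>.mp h4
        exact norm_eq_zero.mp h5
      exact hP1 i₀ hi₀ (by rw [hv0]; simp [Phi])
    -- build the family
    set u : Fin t.card → Fin n → ℂ := fun a j =>
      ((Real.sqrt (wt (t.equivFin.symm a) / (Phi X (vv (t.equivFin.symm a)) * s)) : ℝ) : ℂ)
        * vv (t.equivFin.symm a) j with hu
    have hratio_nn : ∀ i : {x // x ∈ t},
        0 ≤ wt i / (Phi X (vv i) * s) := fun i =>
      div_nonneg (hw0 i i.2) (mul_nonneg (Phi_nonneg _ _) hspos.le)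
    have hPhi_u : ∀ a : Fin t.card,
        Phi X (u a) = (wt (t.equivFin.symm a) / (Phi X (vv (t.equivFin.symm a)) * s))
          * Phi X (vv (t.equivFin.symm a)) := by
      intro a
      rw [hu]
      rw [Phi_smul X _ (vv (t.equivFin.symm a))]
      rw [Real.sq_sqrt (hratio_nn _)]
    have hcoord : ∀ j, ∑ a, ‖u a j‖ ^ 2 ≤ 1 := by
      intro j
      have heval : ∀ a : Fin t.card, ‖u a j‖ ^ 2
          = (wt (t.equivFin.symm a) / (Phi X (vv (t.equivFin.symm a)) * s))
            * ‖vv (t.equivFin.symm a) j‖ ^ 2 := by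
        intro a
        rw [hu]
        rw [norm_mul, Complex.norm_real, Real.norm_eq_abs, mul_pow, sq_abs,
          Real.sq_sqrt (hratio_nn _)]
      rw [Finset.sum_congr rfl fun a _ => heval a]
      rw [Equiv.sum_comp t.equivFin.symm
        (fun i : {x // x ∈ t} => (wt i / (Phi X (vv i) * s)) * ‖vv i j‖ ^ 2)]
      rw [Finset.sum_coe_sort t (fun i => (wt i / (Phi X (vv i) * s)) * ‖vv i j‖ ^ 2)]
      have : ∀ i ∈ t, (wt i / (Phi X (vv i) * s)) * ‖vv i j‖ ^ 2
          = (wt i * (‖vv i j‖ ^ 2 / Phi X (vv i))) / s := by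
        intro i hi
        have := hPpos i hi
        field_simp
      rw [Finset.sum_congr rfl this, ← Finset.sum_div, ← hceq j]
      rw [div_le_one hspos]
      exact hcles j
    have hsum_u : ∑ a, Phi X (u a) = 1 / s := by
      rw [Finset.sum_congr rfl fun a _ => hPhi_u a]
      rw [Equiv.sum_comp t.equivFin.symm
        (fun i : {x // x ∈ t} => (wt i / (Phi X (vv i) * s)) * Phi X (vv i))]
      rw [Finset.sum_coe_sort t (fun i => (wt i / (Phi X (vv i) * s)) * Phi X (vv i))]
      have : ∀ i ∈ t, (wt i / (Phi X (vv i) * s)) * Phi X (vv i) = wt i / s := by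
        intro i hi
        have := hPpos i hi
        field_simp
      rw [Finset.sum_congr rfl this, ← Finset.sum_div, hw1]
    have hH := H t.card u hcoord
    rw [hsum_u] at hH
    rw [div_le_one hspos] at hH
    linarith
  -- separation
  obtain ⟨f, uu, hfO, hfK⟩ :=
    geometric_hahn_banach_open hOconv hOopen (convex_convexHull ℝ C₀) hdisj
  set g : Fin n → ℝ := fun j => f (fun j' => if j = j' then (1:ℝ) else 0) with hg
  have hf_eq : ∀ c : Fin n → ℝ, f c = ∑ j, c j * g j := by
    intro c
    have hc : c = ∑ j, c j • (fun j' => if j = j' then (1:ℝ) else 0) := by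
      funext j'
      rw [Finset.sum_apply]
      simp [Pi.smul_apply]
    conv_lhs => rw [hc]
    rw [map_sum]
    refine Finset.sum_congr rfl fun j _ => ?_
    rw [ContinuousLinearMap.map_smul, smul_eq_mul]
  have huu_pos : 0 < uu := by
    have h0 : (fun _ : Fin n => (0:ℝ)) ∈ O := by intro j; norm_num
    have h1 := hfO _ h0
    have h00 : (fun _ : Fin n => (0:ℝ)) = 0 := rfl
    rw [h00, map_zero] at h1
    exact h1
  have hg_nn : ∀ j, 0 ≤ g j := by
    intro j
    by_contra hneg
    push_neg at hneg
    set M : ℝ := (uu + 1) / (-g j) with hM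
    have hMpos : 0 < M := div_pos (by linarith) (by linarith)
    have hp : (fun j' => if j = j' then -M else 0) ∈ O := by
      intro j'
      by_cases h : j = j' <;> simp [h] <;> linarith
    have := hfO _ hp
    rw [hf_eq] at this
    have heval : ∑ j', (if j = j' then -M else 0) * g j' = -M * g j := by
      rw [Finset.sum_eq_single j]
      · simp
      · intro b _ hb; simp [Ne.symm hb]  -- careful
      · intro h; exact absurd (Finset.mem_univ j) h
    rw [heval] at this
    have hne : g j ≠ 0 := ne_of_lt hneg
    have hkey : -M * g j = uu + 1 := by
      rw [hM, div_neg, neg_neg, div_mul_cancel₀ _ hne]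
    linarith
  have hsum_g : ∑ j, g j ≤ uu := by
    by_contra hcon
    push_neg at hcon
    have hgpos : 0 < ∑ j, g j := lt_trans huu_pos hcon
    set ε : ℝ := (∑ j, g j - uu) / (2 * ∑ j, g j) with hε
    have hε1 : ε < 1 := by
      rw [hε, div_lt_one (by linarith)]
      linarith
    have hε0 : 0 < ε := div_pos (by linarith) (by linarith)
    have hp : (fun _ : Fin n => 1 - ε) ∈ O := by
      intro j
      show 1 - ε < 1
      linarith
    have := hfO _ hp
    rw [hf_eq] at this
    have heval : ∑ j, (1 - ε) * g j = (1 - ε) * ∑ j, g j := by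
      rw [Finset.mul_sum]
    rw [heval] at this
    have hbig : (1 - ε) * ∑ j, g j = (∑ j, g j + uu) / 2 := by
      rw [hε]; field_simp; ring
    rw [hbig] at this
    linarith
  refine ⟨fun j => g j / uu, fun j => div_nonneg (hg_nn j) huu_pos.le, ?_, ?_⟩
  · rw [← Finset.sum_div, div_le_one huu_pos]
    exact hsum_g
  · intro v
    by_cases hv : Phi X v = 0
    · rw [hv]
      exact Finset.sum_nonneg fun j _ =>
        mul_nonneg (div_nonneg (hg_nn j) huu_pos.le) (sq_nonneg _)
    · have hmem : (fun j => ‖v j‖ ^ 2 / Phi X v) ∈ convexHull ℝ C₀ :=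
        subset_convexHull ℝ C₀ ⟨v, hv, rfl⟩
      have hle := hfK _ hmem
      rw [hf_eq] at hle
      have hPpos : 0 < Phi X v := lt_of_le_of_ne (Phi_nonneg _ _) (Ne.symm hv)
      have h2 : uu * Phi X v ≤ ∑ j, ‖v j‖ ^ 2 * g j := by
        have := mul_le_mul_of_nonneg_right hle hPpos.le
        calc uu * Phi X v ≤ (∑ j, (‖v j‖ ^ 2 / Phi X v) * g j) * Phi X v := this
          _ = ∑ j, ‖v j‖ ^ 2 * g j := by
            rw [Finset.sum_mul]
            refine Finset.sum_congr rfl fun j _ => ?_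
            field_simp
      rw [show (∑ j, (g j / uu) * ‖v j‖ ^ 2) = (∑ j, ‖v j‖ ^ 2 * g j) / uu by
        rw [Finset.sum_div]; exact Finset.sum_congr rfl fun j _ => by field_simp]
      rw [le_div_iff₀ huu_pos]
      linarith

lemma factorize {m n : ℕ} (X : Matrix (Fin m) (Fin n) ℂ) (lam : Fin n → ℝ)
    (h0 : ∀ j, 0 ≤ lam j) (h1 : ∑ j, lam j ≤ 1)
    (hb : ∀ v : Fin n → ℂ, Phi X v ≤ ∑ j, lam j * ‖v j‖ ^ 2) :
    ∃ (C : Matrix (Fin m) (Fin n) ℂ) (ξ : Fin n → ℂ),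
      X = C * Matrix.diagonal ξ ∧ opNorm C * eNorm ξ ≤ 1 := by
  classical
  set ξ : Fin n → ℂ := fun j => ((Real.sqrt (lam j) : ℝ) : ℂ) with hξ
  set p : Fin n → ℂ :=
    fun j => if lam j = 0 then 0 else (((Real.sqrt (lam j))⁻¹ : ℝ) : ℂ) with hp
  set C : Matrix (Fin m) (Fin n) ℂ := Matrix.of (fun i j => X i j * p j) with hC
  -- columns with lam j = 0 vanish
  have hcol0 : ∀ j, lam j = 0 → ∀ i, X i j = 0 := by
    intro j hj i
    have hcol := hb (Pi.single j 1)
    have hmv : X.mulVec (Pi.single j (1:ℂ)) = fun i => X i j := by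
      rw [Matrix.mulVec_single]
      funext i; simp
    have hl : Phi X (Pi.single j 1) = ∑ i, ‖X i j‖ ^ 2 := by
      rw [Phi, hmv]
    have hr : (∑ j', lam j' * ‖(Pi.single j (1:ℂ) : Fin n → ℂ) j'‖ ^ 2) = lam j := by
      rw [Finset.sum_eq_single j]
      · simp
      · intro b _ hb'
        simp [Pi.single_eq_of_ne hb']
      · intro h; exact absurd (Finset.mem_univ j) h
    rw [hl, hr, hj] at hcol
    have hsum0 : (∑ i, ‖X i j‖ ^ 2) = 0 :=
      le_antisymm hcol (Finset.sum_nonneg fun _ _ => sq_nonneg _)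
    have := (Finset.sum_eq_zero_iff_of_nonneg (fun i _ => sq_nonneg ‖X i j‖)).mp hsum0
      i (Finset.mem_univ i)
    have h5 : ‖X i j‖ = 0 := pow_eq_zero_iff (by norm_num : (2:ℕ) ≠ 0) |>.mp this
    exact norm_eq_zero.mp h5
  refine ⟨C, ξ, ?_, ?_⟩
  · -- X = C * diagonal ξ
    ext i j
    rw [Matrix.mul_diagonal]
    simp only [hC, Matrix.of_apply]
    by_cases hj : lam j = 0
    · simp [hp, hj, hcol0 j hj i]
    · have hs : Real.sqrt (lam j) ≠ 0 :=
        Real.sqrt_ne_zero'.mpr (lt_of_le_of_ne (h0 j) (Ne.symm hj))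
      simp only [hp, hξ, if_neg hj]
      rw [mul_assoc, ← Complex.ofReal_mul, inv_mul_cancel₀ hs]
      simp
  · -- norm bound
    have heξ : eNorm ξ ≤ 1 := by
      rw [eNorm]
      have : ∀ j : Fin n, ‖ξ j‖ ^ 2 = lam j := by
        intro j
        rw [hξ]
        rw [Complex.norm_real, Real.norm_eq_abs, sq_abs, Real.sq_sqrt (h0 j)]
      rw [Finset.sum_congr rfl fun j _ => this j]
      exact Real.sqrt_le_one.mpr h1
    have hop : opNorm C ≤ 1 := by
      refine opNorm_le_bound C zero_le_one fun w => ?_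
      rw [one_mul]
      have hmv : C.mulVec w = X.mulVec (fun j => p j * w j) := by
        funext i
        simp only [hC, Matrix.mulVec, dotProduct, Matrix.of_apply]
        exact Finset.sum_congr rfl fun j _ => by ring
      have hPhi : (∑ i, ‖C.mulVec w i‖ ^ 2) = Phi X (fun j => p j * w j) := by
        rw [Phi, hmv]
      rw [hPhi]
      have hmid : Phi X (fun j => p j * w j) ≤ ∑ j, lam j * ‖p j * w j‖ ^ 2 := hb _
      have hmid2 : (∑ j, lam j * ‖p j * w j‖ ^ 2) ≤ ∑ j, ‖w j‖ ^ 2 := by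
        refine Finset.sum_le_sum fun j _ => ?_
        by_cases hj : lam j = 0
        · simp [hp, hj, sq_nonneg]
        · have hlpos : 0 < lam j := lt_of_le_of_ne (h0 j) (Ne.symm hj)
          simp only [hp, if_neg hj, norm_mul, Complex.norm_real, Real.norm_eq_abs,
            mul_pow, sq_abs]
          rw [← mul_assoc]
          have hone : lam j * ((Real.sqrt (lam j))⁻¹) ^ 2 = 1 := by
            rw [inv_pow, Real.sq_sqrt (h0 j)]
            exact mul_inv_cancel₀ hj
          rw [hone, one_mul]
      exact Real.sqrt_le_sqrt (hmid.trans hmid2)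
    calc opNorm C * eNorm ξ ≤ 1 * 1 :=
        mul_le_mul hop heξ (Real.sqrt_nonneg _) zero_le_one
    _ = 1 := mul_one 1


/-- Duality: `X` pairs to at most `1` against all `Δ_m(γ) Lᴴ R` with
`‖γ‖₂‖L‖_c‖R‖_c ≤ 1` iff `X = C Δ_n(ξ)` with `‖C‖_∞‖ξ‖₂ ≤ 1`. -/
theorem cb_F_ball_eq_polar_of_T_ball
    (m n : ℕ) (X : Matrix (Fin m) (Fin n) ℂ) :
    (∀ (l : ℕ) (γ : Fin m → ℂ) (L : Matrix (Fin l) (Fin m) ℂ)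
        (R : Matrix (Fin l) (Fin n) ℂ),
        eNorm γ * colNorm L * colNorm R ≤ 1 →
        ‖((Matrix.diagonal γ * (Lᴴ * R))ᴴ * X).trace‖ ≤ 1) ↔
      (∃ (C : Matrix (Fin m) (Fin n) ℂ) (ξ : Fin n → ℂ),
        X = C * Matrix.diagonal ξ ∧ opNorm C * eNorm ξ ≤ 1) := by
  constructor
  · intro h1
    obtain ⟨lam, hl0, hl1, hlb⟩ := exists_lambda X (cond_imp_H X h1)
    exact factorize X lam hl0 hl1 hlb
  · rintro ⟨C, ξ, hXeq, hle⟩ l γ L R hprod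
    rw [hXeq]
    exact easy_dir C ξ hle γ L R hprod
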